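/- Let f ∈ O and let g ∈ (f) + J(f). If r, r₁, …, rₙ ∈ O satisfy the relation r·f + Σ_{k=1}^{n} r_k·∂f/∂x_k = 0, then r·g + Σ_{k=1}^{n} r_k·∂g/∂x_k ∈ (f) + J(f). (This is the key computation showing that every syzygy of (f, ∂f/∂x₁, …, ∂f/∂xₙ) lifts to a syzygy of (f+εg, ∂(f+εg)/∂x₁, …, ∂(f+εg)/∂xₙ) over the dual numbers.) -/

import Mathlib

/-- Formal partial derivative of a multivariate power series with respect to variable `i`. -/
noncomputable def pd {n : ℕ} {R : Type*} [CommSemiring R] (i : Fin n)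
    (f : MvPowerSeries (Fin n) R) : MvPowerSeries (Fin n) R :=
  fun m => (m i + 1) • f (m + Finsupp.single i 1)

/-- The Jacobian ideal `J(f) = (∂f/∂x₁, …, ∂f/∂xₙ)` of `f ∈ ℂ[[x₁,…,xₙ]]`. -/
noncomputable def jacIdeal {n : ℕ} (f : MvPowerSeries (Fin n) ℂ) :
    Ideal (MvPowerSeries (Fin n) ℂ) :=
  Ideal.span (Set.range fun i : Fin n => pd i f)

namespace SyzAux

open Finset MvPowerSeries

variable {n : ℕ}

lemma coeff_pd (i : Fin n) (f : MvPowerSeries (Fin n) ℂ) (m : Fin n →₀ ℕ) :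
    MvPowerSeries.coeff m (pd i f) =
      (m i + 1) • MvPowerSeries.coeff (m + Finsupp.single i 1) f := rfl

lemma pd_ext {f g : MvPowerSeries (Fin n) ℂ}
    (h : ∀ m, MvPowerSeries.coeff m f = MvPowerSeries.coeff m g) : f = g :=
  MvPowerSeries.ext h

lemma pd_add (i : Fin n) (f g : MvPowerSeries (Fin n) ℂ) :
    pd i (f + g) = pd i f + pd i g := by
  apply pd_ext; intro m
  simp [coeff_pd, smul_add]

lemma pd_zero (i : Fin n) : pd i (0 : MvPowerSeries (Fin n) ℂ) = 0 := by
  apply pd_ext; intro m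
  simp [coeff_pd]

/-- `pd i` bundled as an additive monoid hom. -/
noncomputable def pdHom (i : Fin n) :
    MvPowerSeries (Fin n) ℂ →+ MvPowerSeries (Fin n) ℂ where
  toFun := pd i
  map_zero' := pd_zero i
  map_add' := pd_add i

lemma pd_sum {α : Type*} (i : Fin n) (s : Finset α) (F : α → MvPowerSeries (Fin n) ℂ) :
    pd i (∑ k ∈ s, F k) = ∑ k ∈ s, pd i (F k) :=
  map_sum (pdHom i) F s

lemma shift_sum (i : Fin n) (m : Fin n →₀ ℕ)
    (F : (Fin n →₀ ℕ) → (Fin n →₀ ℕ) → ℂ) :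
    ∑ p ∈ antidiagonal (m + Finsupp.single i 1),
        ((p.1 : Fin n →₀ ℕ) i) • F p.1 p.2
      = ∑ p ∈ antidiagonal m,
          ((p.1 : Fin n →₀ ℕ) i + 1) • F (p.1 + Finsupp.single i 1) p.2 := by
  symm
  apply Finset.sum_bij_ne_zero (i := fun p _ _ => (p.1 + Finsupp.single i 1, p.2))
  · intro a ha _
    rw [Finset.HasAntidiagonal.mem_antidiagonal] at ha ⊢
    rw [← ha]; ext j; simp only [Finsupp.add_apply]; omega
  · intro a₁ h₁₁ h₁₂ a₂ h₂₁ h₂₂ h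
    rw [Prod.mk.injEq] at h
    exact Prod.ext (add_right_cancel h.1) h.2
  · intro b hb hbne
    have hb1 : b.1 i ≠ 0 := by
      intro h0
      apply hbne
      rw [h0, zero_smul]
    have hle : Finsupp.single i 1 ≤ b.1 :=
      Finsupp.single_le_iff.mpr (Nat.one_le_iff_ne_zero.mpr hb1)
    have hc : b.1 - Finsupp.single i 1 + Finsupp.single i 1 = b.1 :=
      tsub_add_cancel_of_le hle
    refine ⟨(b.1 - Finsupp.single i 1, b.2), ?_, ?_, ?_⟩
    · rw [Finset.HasAntidiagonal.mem_antidiagonal] at hb ⊢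
      apply add_right_cancel (b := Finsupp.single i 1)
      rw [add_right_comm, hc, hb]
    · simp only
      rw [hc]
      intro h0
      apply hbne
      have hF : F b.1 b.2 = 0 := by
        rcases smul_eq_zero.mp h0 with h | h
        · exact absurd h (by simp)
        · exact h
      rw [hF, smul_zero]
    · simp only
      rw [hc]
  · intro a _ _
    simp only
    congr 1
    rw [Finsupp.add_apply, Finsupp.single_eq_same]

lemma coeff_apply' (f : MvPowerSeries (Fin n) ℂ) (d : Fin n →₀ ℕ) :
    MvPowerSeries.coeff d f = f d := rfl

lemma pd_mul (i : Fin n) (f g : MvPowerSeries (Fin n) ℂ) :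
    pd i (f * g) = pd i f * g + f * pd i g := by
  classical
  apply pd_ext; intro m
  rw [map_add, coeff_pd, MvPowerSeries.coeff_mul, MvPowerSeries.coeff_mul,
    MvPowerSeries.coeff_mul, Finset.smul_sum]
  have step1 : ∀ p ∈ antidiagonal (m + Finsupp.single i 1),
      (m i + 1) • (MvPowerSeries.coeff p.1 f * MvPowerSeries.coeff p.2 g)
        = ((p.1 : Fin n →₀ ℕ) i) • (MvPowerSeries.coeff p.1 f * MvPowerSeries.coeff p.2 g)
          + ((p.2 : Fin n →₀ ℕ) i) • (MvPowerSeries.coeff p.1 f * MvPowerSeries.coeff p.2 g) := by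
    intro p hp
    rw [Finset.HasAntidiagonal.mem_antidiagonal] at hp
    have : p.1 i + p.2 i = m i + 1 := by
      have := congrArg (fun x : Fin n →₀ ℕ => x i) hp
      simpa [Finsupp.add_apply, Finsupp.single_eq_same] using this
    rw [← add_smul, this]
  rw [Finset.sum_congr rfl step1, Finset.sum_add_distrib]
  have hA : ∑ p ∈ antidiagonal (m + Finsupp.single i 1),
      ((p.1 : Fin n →₀ ℕ) i) • (MvPowerSeries.coeff p.1 f * MvPowerSeries.coeff p.2 g)
        = ∑ p ∈ antidiagonal m,
            MvPowerSeries.coeff p.1 (pd i f) * MvPowerSeries.coeff p.2 g := by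
    rw [shift_sum i m (fun a b => MvPowerSeries.coeff a f * MvPowerSeries.coeff b g)]
    exact Finset.sum_congr rfl fun p _ => by rw [coeff_pd, smul_mul_assoc]
  have hB : ∑ p ∈ antidiagonal (m + Finsupp.single i 1),
      ((p.2 : Fin n →₀ ℕ) i) • (MvPowerSeries.coeff p.1 f * MvPowerSeries.coeff p.2 g)
        = ∑ p ∈ antidiagonal m,
            MvPowerSeries.coeff p.1 f * MvPowerSeries.coeff p.2 (pd i g) := by
    rw [Finsupp.sum_antidiagonal_swap (m + Finsupp.single i 1)
      (fun a b => (b i) • (MvPowerSeries.coeff a f * MvPowerSeries.coeff b g))]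
    rw [shift_sum i m (fun a b => MvPowerSeries.coeff b f * MvPowerSeries.coeff a g)]
    rw [Finsupp.sum_antidiagonal_swap m
      (fun a b => (a i + 1) • (MvPowerSeries.coeff b f
        * MvPowerSeries.coeff (a + Finsupp.single i 1) g))]
    exact Finset.sum_congr rfl fun p _ => by rw [coeff_pd, mul_smul_comm]
  rw [hA, hB]

lemma pd_comm (i j : Fin n) (f : MvPowerSeries (Fin n) ℂ) :
    pd i (pd j f) = pd j (pd i f) := by
  apply pd_ext; intro m
  rw [coeff_pd, coeff_pd, coeff_pd, coeff_pd, smul_smul, smul_smul]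
  congr 1
  · simp only [Finsupp.add_apply, Finsupp.single_apply]
    rcases eq_or_ne i j with h | h
    · subst h; simp
    · simp [h, h.symm, Ne.symm h]; ring
  · congr 1
    abel

end SyzAux

open SyzAux in
/-- if `g ∈ (f) + J(f)` and `r·f + Σ r_k·∂f/∂x_k = 0` is a relation among
`f, ∂f/∂x₁, …, ∂f/∂xₙ`, then `r·g + Σ r_k·∂g/∂x_k ∈ (f) + J(f)`. -/
theorem syzygy_lifts (n : ℕ) (hn : 1 ≤ n)
    (f g : MvPowerSeries (Fin n) ℂ)
    (hg : g ∈ Ideal.span {f} + jacIdeal f)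
    (r : MvPowerSeries (Fin n) ℂ) (rr : Fin n → MvPowerSeries (Fin n) ℂ)
    (hrel : r * f + ∑ k : Fin n, rr k * pd k f = 0) :
    r * g + ∑ k : Fin n, rr k * pd k g ∈ Ideal.span {f} + jacIdeal f := by
  set I : Ideal (MvPowerSeries (Fin n) ℂ) := Ideal.span {f} + jacIdeal f with hI
  have hf_mem : ∀ c : MvPowerSeries (Fin n) ℂ, c * f ∈ I := fun c =>
    Submodule.mem_sup_left (Ideal.mul_mem_left _ c (Ideal.mem_span_singleton_self f))
  have hpd_mem : ∀ (c : MvPowerSeries (Fin n) ℂ) (i : Fin n), c * pd i f ∈ I := fun c i =>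
    Submodule.mem_sup_right (Ideal.mul_mem_left _ c (Ideal.subset_span ⟨i, rfl⟩))
  -- decompose g
  obtain ⟨y, hy, z, hz, hyz⟩ := Submodule.mem_sup.mp hg
  obtain ⟨a, ha⟩ := Ideal.mem_span_singleton'.mp hy
  obtain ⟨b, hb⟩ := Submodule.mem_span_range_iff_exists_fun _ |>.mp hz
  have hgdef : g = a * f + ∑ i : Fin n, b i * pd i f := by
    rw [← hyz, ← ha, ← hb]
    simp [smul_eq_mul]
  -- the key computation: for each i, ∑ k, rr k * pd i (pd k f) ∈ I
  have hKey : ∀ i : Fin n, (∑ k : Fin n, rr k * pd i (pd k f)) ∈ I := by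
    intro i
    have h := congrArg (pd i) hrel
    rw [pd_add, pd_zero, pd_sum, pd_mul] at h
    simp only [pd_mul] at h
    rw [Finset.sum_add_distrib] at h
    have heq : ∑ k : Fin n, rr k * pd i (pd k f)
        = -(pd i r * f) - r * pd i f - ∑ k : Fin n, pd i (rr k) * pd k f := by
      linear_combination h
    rw [heq]
    refine I.sub_mem (I.sub_mem (I.neg_mem (hf_mem _)) (hpd_mem _ _)) ?_
    exact Ideal.sum_mem I fun k _ => hpd_mem _ _
  -- expand pd k g
  have hpdg : ∀ k : Fin n, pd k g
      = (pd k a * f + a * pd k f + ∑ i : Fin n, pd k (b i) * pd i f)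
        + ∑ i : Fin n, b i * pd k (pd i f) := by
    intro k
    rw [hgdef, pd_add, pd_mul, pd_sum]
    simp only [pd_mul]
    rw [Finset.sum_add_distrib]
    ring
  apply I.add_mem
  · exact Ideal.mul_mem_left _ r hg
  · have hsplit : ∑ k : Fin n, rr k * pd k g
        = (∑ k : Fin n, rr k * (pd k a * f + a * pd k f + ∑ i : Fin n, pd k (b i) * pd i f))
          + ∑ k : Fin n, rr k * ∑ i : Fin n, b i * pd k (pd i f) := by
      simp only [hpdg, mul_add, Finset.sum_add_distrib]
    rw [hsplit]
    apply I.add_mem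
    · refine Ideal.sum_mem I fun k _ => Ideal.mul_mem_left _ _ ?_
      refine I.add_mem (I.add_mem (hf_mem _) (hpd_mem _ _)) ?_
      exact Ideal.sum_mem I fun i _ => hpd_mem _ _
    · have hU : ∑ k : Fin n, rr k * ∑ i : Fin n, b i * pd k (pd i f)
          = ∑ i : Fin n, b i * ∑ k : Fin n, rr k * pd i (pd k f) := by
        simp only [Finset.mul_sum]
        rw [Finset.sum_comm]
        refine Finset.sum_congr rfl fun i _ => Finset.sum_congr rfl fun k _ => ?_
        rw [pd_comm k i]
        ring
      rw [hU]
      exact Ideal.sum_mem I fun i _ => Ideal.mul_mem_left _ _ (hKey i)
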